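/- arXiv:2603.04894 — 6 statements merged into one kernel-verified Lean document; each statement's English description precedes it below -/
import Mathlib

section
/- Let ε ∈ (0,1), δ ∈ (0,1), Δ > 0, and let σ ≥ Δ·√(2·ln(1.25/δ))/ε. Then for any μ, μ' ∈ ℝ with |μ − μ'| ≤ Δ and any measurable set O ⊆ ℝ, the Gaussian measures satisfy gaussianReal μ σ² (O) ≤ e^ε · gaussianReal μ' σ² (O) + δ. That is, the one-dimensional Gaussian mechanism with noise scale σ applied to a statistic of sensitivity Δ is (ε, δ)-differentially private. -/
set_option maxHeartbeats 1000000

open MeasureTheory ProbabilityTheory Real Set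
open scoped NNReal ENNReal

-- half mass at mean
lemma gauss_Ioi_mean (m : ℝ) (v : ℝ≥0) (hv : v ≠ 0) :
    gaussianReal m v (Set.Ioi m) = ENNReal.ofReal (1/2) := by
  set P := gaussianReal m v with hP
  have hmap : P.map (fun x => x * (-1) + 2*m) = P := by
    have h1 : P.map (· * (-1)) = gaussianReal (-1 * m) (⟨(-1:ℝ)^2, sq_nonneg _⟩ * v) :=
      gaussianReal_map_mul_const (-1)
    have h2 : (fun x => x * (-1) + 2*m) = (· + 2*m) ∘ (· * (-1)) := rfl
    rw [h2, ← Measure.map_map (by fun_prop) (by fun_prop), h1,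
      gaussianReal_map_add_const]
    congr 1
    · ring
    · apply NNReal.eq; show (-1:ℝ)^2 * (v:ℝ) = v; norm_num
  have hpre : (fun x => x * (-1) + 2*m) ⁻¹' (Set.Ioi m) = Set.Iio m := by
    ext x; simp [Set.mem_Ioi, Set.mem_Iio]; constructor <;> intro h <;> linarith
  have hIio : P (Set.Iio m) = P (Set.Ioi m) := by
    conv_rhs => rw [← hmap]
    rw [Measure.map_apply (by fun_prop) measurableSet_Ioi, hpre]
  have hsingle : P {m} = 0 := by
    refine gaussianReal_absolutelyContinuous m hv ?_
    simp
  have hcover : Set.Iio m ∪ ({m} ∪ Set.Ioi m) = Set.univ := by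
    ext x
    rcases lt_trichotomy x m with h|h|h <;> simp [h]
  have huniv : P (Set.Iio m) + (P {m} + P (Set.Ioi m)) = 1 := by
    rw [← measure_union (by simp) measurableSet_Ioi,
      ← measure_union ?_ ((measurableSet_singleton m).union measurableSet_Ioi), hcover]
    · exact measure_univ
    · rw [Set.disjoint_union_right]
      exact ⟨by simp, (Set.Iio_disjoint_Ici (le_refl m)).mono_right Set.Ioi_subset_Ici_self⟩
  rw [hsingle, zero_add, hIio] at huniv
  have : (2 : ℝ≥0∞) * P (Set.Ioi m) = 1 := by rw [two_mul]; exact huniv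
  have h2 : P (Set.Ioi m) = 1/2 := by
    rw [ENNReal.eq_div_iff (two_ne_zero) (by norm_num)]
    exact this
  rw [h2, ENNReal.ofReal_div_of_pos (by norm_num)]
  norm_num

lemma gauss_int_Ioi_mean (m : ℝ) (v : ℝ≥0) (hv : v ≠ 0) :
    ∫ x in Set.Ioi m, gaussianPDFReal m v x = 1/2 := by
  have h := gaussianReal_apply_eq_integral m hv (Set.Ioi m)
  rw [gauss_Ioi_mean m v hv] at h
  have hnn : 0 ≤ ∫ x in Set.Ioi m, gaussianPDFReal m v x :=
    integral_nonneg fun x => gaussianPDFReal_nonneg _ _ _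
  exact ((ENNReal.ofReal_eq_ofReal_iff (by norm_num) hnn).mp h).symm

lemma gauss_tail_high (m t : ℝ) (v : ℝ≥0) (hv : v ≠ 0) (ht : m ≤ t) :
    gaussianReal m v (Set.Ioi t) ≤ ENNReal.ofReal (Real.exp (-(t-m)^2/(2*v)) * (1/2)) := by
  have hvpos : (0:ℝ) < (v:ℝ) := by
    have : 0 < v := pos_iff_ne_zero.mpr hv
    exact_mod_cast this
  rw [gaussianReal_apply_eq_integral m hv]
  refine ENNReal.ofReal_le_ofReal ?_
  calc ∫ x in Set.Ioi t, gaussianPDFReal m v x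
      ≤ ∫ x in Set.Ioi t, Real.exp (-(t-m)^2/(2*v)) * gaussianPDFReal t v x := by
        refine setIntegral_mono_on ((integrable_gaussianPDFReal m v).restrict)
          (((integrable_gaussianPDFReal t v).restrict).const_mul _) measurableSet_Ioi ?_
        intro x hx
        have hx' : t < x := hx
        rw [gaussianPDFReal, gaussianPDFReal]
        have hexp : Real.exp (- (x - m)^2 / (2*v)) ≤
            Real.exp (-(t-m)^2/(2*v) + - (x - t)^2 / (2*v)) := by
          refine Real.exp_le_exp.mpr ?_
          rw [← add_div, div_le_div_iff₀ (by positivity) (by positivity)]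
          nlinarith [sq_nonneg (x-t), sq_nonneg (t-m), mul_nonneg (sub_nonneg.mpr ht) (le_of_lt (sub_pos.mpr hx'))]
        calc (Real.sqrt (2*π*v))⁻¹ * Real.exp (- (x - m)^2 / (2*v))
            ≤ (Real.sqrt (2*π*v))⁻¹ * Real.exp (-(t-m)^2/(2*v) + - (x - t)^2 / (2*v)) := by
              exact mul_le_mul_of_nonneg_left hexp (by positivity)
          _ = Real.exp (-(t-m)^2/(2*v)) * ((Real.sqrt (2*π*v))⁻¹ * Real.exp (- (x - t)^2 / (2*v))) := by
              rw [Real.exp_add]; ring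
    _ = Real.exp (-(t-m)^2/(2*v)) * (1/2) := by
        rw [integral_const_mul, gauss_int_Ioi_mean t v hv]

lemma gauss_tail_low (m t : ℝ) (v : ℝ≥0) (hv : v ≠ 0) (ht : t ≤ m) :
    gaussianReal m v (Set.Ioi t) ≤
      ENNReal.ofReal ((m - t) * (Real.sqrt (2*π*v))⁻¹ + 1/2) := by
  have hsub : Set.Ioi t ⊆ Set.Ioc t m ∪ Set.Ioi m := by
    intro x hx
    rcases le_or_gt x m with h|h
    · exact Or.inl ⟨hx, h⟩
    · exact Or.inr h
  calc gaussianReal m v (Set.Ioi t)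
      ≤ gaussianReal m v (Set.Ioc t m) + gaussianReal m v (Set.Ioi m) :=
        (measure_mono hsub).trans (measure_union_le _ _)
    _ ≤ ENNReal.ofReal ((m - t) * (Real.sqrt (2*π*v))⁻¹) + ENNReal.ofReal (1/2) := by
        refine add_le_add ?_ (le_of_eq (gauss_Ioi_mean m v hv))
        rw [gaussianReal_apply_eq_integral m hv]
        refine ENNReal.ofReal_le_ofReal ?_
        calc ∫ x in Set.Ioc t m, gaussianPDFReal m v x
            ≤ ∫ _x in Set.Ioc t m, (Real.sqrt (2*π*(v:ℝ)))⁻¹ := by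
              refine setIntegral_mono_on ((integrable_gaussianPDFReal m v).restrict)
                (integrableOn_const (by simp [Real.volume_Ioc]))
                measurableSet_Ioc ?_
              intro x _
              rw [gaussianPDFReal]
              have : Real.exp (- (x - m)^2 / (2*v)) ≤ 1 := by
                refine Real.exp_le_one_iff.mpr ?_
                have hvpos : (0:ℝ) < (v:ℝ) := by
                  have : 0 < v := pos_iff_ne_zero.mpr hv
                  exact_mod_cast this
                rw [neg_div]
                have : (0:ℝ) ≤ (x-m)^2 / (2*v) := by positivity
                linarith
              calc (Real.sqrt (2*π*v))⁻¹ * Real.exp (- (x - m)^2 / (2*v))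
                  ≤ (Real.sqrt (2*π*v))⁻¹ * 1 := mul_le_mul_of_nonneg_left this (by positivity)
                _ = (Real.sqrt (2*π*(v:ℝ)))⁻¹ := mul_one _
          _ = (m - t) * (Real.sqrt (2*π*(v:ℝ)))⁻¹ := by
              rw [setIntegral_const, Real.volume_real_Ioc_of_le ht, smul_eq_mul]
    _ = ENNReal.ofReal ((m - t) * (Real.sqrt (2*π*v))⁻¹ + 1/2) := by
        rw [ENNReal.ofReal_add (mul_nonneg (by linarith) (by positivity)) (by norm_num)]

lemma log25 : (1/2 : ℝ) ≤ Real.log 2.5 := by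
  have h04 : Real.log (0.4 : ℝ) ≤ 0.4 - 1 := Real.log_le_sub_one_of_pos (by norm_num)
  have h : Real.log (2.5 : ℝ) = - Real.log (0.4 : ℝ) := by
    rw [← Real.log_inv]; norm_num
  linarith

lemma log125 : (0.2 : ℝ) ≤ Real.log 1.25 := by
  have h08 : Real.log (0.8 : ℝ) ≤ 0.8 - 1 := Real.log_le_sub_one_of_pos (by norm_num)
  have h : Real.log (1.25 : ℝ) = - Real.log (0.8 : ℝ) := by
    rw [← Real.log_inv]; norm_num
  linarith

lemma sqrt2pi_ge : (2.5 : ℝ) ≤ Real.sqrt (2 * π) := by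
  have hpi : (3.141592 : ℝ) ≤ π := Real.pi_gt_d6.le
  nlinarith [Real.sq_sqrt (show (0:ℝ) ≤ 2 * π by positivity), Real.sqrt_nonneg (2 * π)]

/-- Shared setup facts. -/
lemma arith_setup (ε δ Δ σ c : ℝ) (hε0 : 0 < ε) (hε1 : ε < 1)
    (hδ0 : 0 < δ) (hδ1 : δ < 1) (hΔ : 0 < Δ) (hc : 0 < c) (hcΔ : c ≤ Δ)
    (hσ : Δ * Real.sqrt (2 * Real.log (1.25 / δ)) ≤ σ * ε) (hσpos : 0 < σ) :
    0 < Real.log (1.25 / δ) ∧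
    Real.sqrt (2 * Real.log (1.25 / δ)) ^ 2 = 2 * Real.log (1.25 / δ) ∧
    σ * Real.sqrt (2 * Real.log (1.25 / δ)) ≤ σ ^ 2 * ε / c ∧
    c / 2 ≤ σ / (2 * Real.sqrt (2 * Real.log (1.25 / δ))) := by
  have hL : 0 < Real.log (1.25 / δ) := Real.log_pos (by rw [lt_div_iff₀ hδ0]; linarith)
  set K := Real.sqrt (2 * Real.log (1.25 / δ)) with hKdef
  have hK : 0 < K := Real.sqrt_pos.mpr (by linarith)
  have hK2 : K ^ 2 = 2 * Real.log (1.25 / δ) := Real.sq_sqrt (by linarith)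
  have hcK : c * K ≤ σ * ε := le_trans (by nlinarith) hσ
  refine ⟨hL, hK2, ?_, ?_⟩
  · rw [le_div_iff₀ hc]; nlinarith
  · rw [div_le_div_iff₀ (by norm_num : (0:ℝ) < 2) (mul_pos two_pos hK)]; nlinarith

/-- Case A arithmetic: when `0 ≤ w`. -/
lemma arithA (ε δ Δ σ c w : ℝ) (hε0 : 0 < ε) (hε1 : ε < 1)
    (hδ0 : 0 < δ) (hδ1 : δ < 1) (hΔ : 0 < Δ) (hc : 0 < c) (hcΔ : c ≤ Δ)
    (hσ : Δ * Real.sqrt (2 * Real.log (1.25 / δ)) ≤ σ * ε) (hσpos : 0 < σ)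
    (hw : w = σ ^ 2 * ε / c - c / 2) :
    Real.exp (-w ^ 2 / (2 * σ ^ 2)) * (1/2) ≤ δ := by
  obtain ⟨hL, hK2, hup, hlow⟩ :=
    arith_setup ε δ Δ σ c hε0 hε1 hδ0 hδ1 hΔ hc hcΔ hσ hσpos
  set K := Real.sqrt (2 * Real.log (1.25 / δ)) with hKdef
  have hK : 0 < K := Real.sqrt_pos.mpr (by linarith)
  have hσ2 : (0:ℝ) < 2 * σ ^ 2 := by positivity
  rcases le_or_gt (1/2 : ℝ) δ with hd2 | hd2
  · have h1 : Real.exp (-w ^ 2 / (2 * σ ^ 2)) ≤ 1 := by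
      refine Real.exp_le_one_iff.mpr ?_
      rw [neg_div]
      exact neg_nonpos_of_nonneg (div_nonneg (sq_nonneg w) hσ2.le)
    nlinarith [Real.exp_nonneg (-w ^ 2 / (2 * σ ^ 2))]
  · have hlog2δ : Real.log (2 * δ) = Real.log 2.5 - Real.log (1.25 / δ) := by
      rw [← Real.log_div (by norm_num) (ne_of_gt (div_pos (by norm_num) hδ0))]
      congr 1
      field_simp; ring
    have hLlb : Real.log 2.5 < Real.log (1.25 / δ) := by
      refine Real.log_lt_log (by norm_num) ?_
      rw [lt_div_iff₀ hδ0]; nlinarith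
    have hK1 : 1 ≤ K := by nlinarith [log25]
    have hw1 : σ * K - σ / (2 * K) ≤ w := by rw [hw]; linarith
    have hw0 : 0 ≤ σ * K - σ / (2 * K) := by
      have h0 : (1:ℝ) ≤ K * (2 * K) := by nlinarith [hK1]
      have h : σ / (2 * K) ≤ σ * K := by
        rw [div_le_iff₀ (mul_pos two_pos hK)]
        nlinarith [h0, hσpos.le]
      linarith
    have hsq : σ ^ 2 * (K ^ 2 - 1) ≤ w ^ 2 := by
      have h1 : (σ * K - σ / (2 * K)) ^ 2 ≤ w ^ 2 := pow_le_pow_left₀ hw0 hw1 2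
      have h2 : (σ * K - σ / (2 * K)) ^ 2
          = σ ^ 2 * K ^ 2 - σ ^ 2 + σ ^ 2 / (4 * K ^ 2) := by
        field_simp; ring
      have h3 : 0 ≤ σ ^ 2 / (4 * K ^ 2) := div_nonneg (sq_nonneg σ) (by positivity)
      linarith
    have hsq' : σ ^ 2 * (2 * Real.log (1.25 / δ) - 1) ≤ w ^ 2 := by
      rw [hK2] at hsq; linarith
    have hs25 : 0 ≤ σ ^ 2 * (2 * Real.log 2.5 - 1) :=
      mul_nonneg (sq_nonneg σ) (by linarith [log25])
    have hexparg : -w ^ 2 / (2 * σ ^ 2) ≤ Real.log (2 * δ) := by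
      rw [hlog2δ, neg_div, neg_le_sub_iff_le_add]
      have h : Real.log (1.25 / δ) - Real.log 2.5 ≤ w ^ 2 / (2 * σ ^ 2) := by
        rw [le_div_iff₀ hσ2]
        nlinarith [hsq', hs25]
      linarith
    have h : Real.exp (-w ^ 2 / (2 * σ ^ 2)) ≤ 2 * δ :=
      (Real.exp_le_exp.mpr hexparg).trans_eq (Real.exp_log (by linarith))
    linarith

/-- Case B arithmetic: when `w < 0`. -/
lemma arithB (ε δ Δ σ c w : ℝ) (hε0 : 0 < ε) (hε1 : ε < 1)
    (hδ0 : 0 < δ) (hδ1 : δ < 1) (hΔ : 0 < Δ) (hc : 0 < c) (hcΔ : c ≤ Δ)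
    (hσ : Δ * Real.sqrt (2 * Real.log (1.25 / δ)) ≤ σ * ε) (hσpos : 0 < σ)
    (hw : w = σ ^ 2 * ε / c - c / 2) (hB : w < 0) :
    (-w) * (Real.sqrt (2 * π) * σ)⁻¹ + 1/2 ≤ δ := by
  obtain ⟨hL, hK2, hup, hlow⟩ :=
    arith_setup ε δ Δ σ c hε0 hε1 hδ0 hδ1 hΔ hc hcΔ hσ hσpos
  set K := Real.sqrt (2 * Real.log (1.25 / δ)) with hKdef
  have hK : 0 < K := Real.sqrt_pos.mpr (by linarith)
  have hsp : (0:ℝ) < Real.sqrt (2 * π) := lt_of_lt_of_le (by norm_num) sqrt2pi_ge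
  have hmt : -w ≤ σ / (2 * K) := by
    have h2 : 0 < σ ^ 2 * ε / c := div_pos (mul_pos (pow_pos hσpos 2) hε0) hc
    rw [hw]; linarith
  have hLlb : (0.2 : ℝ) ≤ Real.log (1.25 / δ) := by
    refine le_trans log125 (Real.log_le_log (by norm_num) ?_)
    rw [le_div_iff₀ hδ0]; nlinarith
  have hK063 : (0.63 : ℝ) ≤ K := by nlinarith
  have hterm : (-w) * (Real.sqrt (2 * π) * σ)⁻¹ ≤ 0.32 := by
    have hinv : (Real.sqrt (2 * π) * σ)⁻¹ ≤ (2.5 * σ)⁻¹ := by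
      refine inv_anti₀ (by linarith) ?_
      nlinarith [sqrt2pi_ge]
    have h1 : (-w) * (Real.sqrt (2 * π) * σ)⁻¹ ≤ (σ / (2 * K)) * (2.5 * σ)⁻¹ := by
      refine mul_le_mul hmt hinv (inv_nonneg.mpr (by positivity)) ?_
      exact div_nonneg hσpos.le (by linarith)
    have h2 : (σ / (2 * K)) * (2.5 * σ)⁻¹ = 1 / (5 * K) := by
      field_simp; ring
    have h3 : (1 : ℝ) / (5 * K) ≤ 0.32 := by
      rw [div_le_iff₀ (by linarith)]; nlinarith
    linarith
  have hKhalf : K ^ 2 < 1 / 2 := by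
    have hB' : σ ^ 2 * ε / c - c / 2 < 0 := by rw [hw] at hB; exact hB
    have h4 : σ * K < σ / (2 * K) := by linarith
    rw [lt_div_iff₀ (mul_pos two_pos hK)] at h4
    nlinarith
  have hL14 : Real.log (1.25 / δ) < 1 / 4 := by nlinarith
  have hexpL : Real.exp (Real.log (1.25 / δ)) = 1.25 / δ :=
    Real.exp_log (div_pos (by norm_num) hδ0)
  have hδlb : (0.9375 : ℝ) ≤ δ := by
    have h1 : Real.exp (Real.log (1.25 / δ)) ≤ Real.exp (1/4 : ℝ) :=
      Real.exp_le_exp.mpr hL14.le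
    have h2 : Real.exp (1/4 : ℝ) ≤ 4 / 3 := by
      have h3 : (3/4 : ℝ) ≤ Real.exp (-(1/4) : ℝ) := by
        have := Real.add_one_le_exp (-(1/4) : ℝ)
        linarith
      have h5 : Real.exp (1/4 : ℝ) * Real.exp (-(1/4) : ℝ) = 1 := by
        rw [← Real.exp_add]; norm_num
      nlinarith [mul_nonneg (Real.exp_nonneg (1/4 : ℝ)) (sub_nonneg.mpr h3)]
    have h4 : 1.25 / δ ≤ 4 / 3 := by rw [← hexpL]; linarith
    rw [div_le_div_iff₀ hδ0 (by norm_num)] at h4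
    linarith
  linarith

lemma gauss_dp_key (ε δ Δ σ : ℝ) (hε : ε ∈ Set.Ioo (0 : ℝ) 1) (hδ : δ ∈ Set.Ioo (0 : ℝ) 1)
    (hΔ : 0 < Δ) (hσ : σ ≥ Δ * Real.sqrt (2 * Real.log (1.25 / δ)) / ε)
    (μ μ' : ℝ) (hc : 0 < μ - μ') (hμ : |μ - μ'| ≤ Δ) (O : Set ℝ) (hO : MeasurableSet O) :
    gaussianReal μ ⟨σ ^ 2, sq_nonneg σ⟩ O
      ≤ ENNReal.ofReal (Real.exp ε) * gaussianReal μ' ⟨σ ^ 2, sq_nonneg σ⟩ O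
        + ENNReal.ofReal δ := by
  obtain ⟨hε0, hε1⟩ := hε
  obtain ⟨hδ0, hδ1⟩ := hδ
  have hcΔ : μ - μ' ≤ Δ := le_trans (le_abs_self _) hμ
  have hL : 0 < Real.log (1.25 / δ) := Real.log_pos (by rw [lt_div_iff₀ hδ0]; linarith)
  have hK : 0 < Real.sqrt (2 * Real.log (1.25 / δ)) := Real.sqrt_pos.mpr (by linarith)
  have hσpos : 0 < σ := lt_of_lt_of_le (div_pos (mul_pos hΔ hK) hε0) hσ
  have hσε : Δ * Real.sqrt (2 * Real.log (1.25 / δ)) ≤ σ * ε := by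
    rw [ge_iff_le, div_le_iff₀ hε0] at hσ
    linarith
  set v : ℝ≥0 := (⟨σ ^ 2, sq_nonneg σ⟩ : ℝ≥0) with hvdef
  have hv : v ≠ 0 := by
    intro h
    exact (pow_ne_zero 2 (ne_of_gt hσpos)) (congrArg NNReal.toReal h)
  have hvcoe : ((v : ℝ)) = σ ^ 2 := rfl
  obtain ⟨c, hcdef⟩ : ∃ c : ℝ, c = μ - μ' := ⟨_, rfl⟩
  rw [← hcdef] at hc hcΔ
  obtain ⟨t, htdef⟩ : ∃ t : ℝ, t = μ + (σ ^ 2 * ε / c - c / 2) := ⟨_, rfl⟩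
  have hw : t - μ = σ ^ 2 * ε / c - c / 2 := by rw [htdef]; ring
  -- density comparison on Iic t
  have hpdf : ∀ x ∈ O ∩ Set.Iic t,
      gaussianPDF μ v x ≤ ENNReal.ofReal (Real.exp ε) * gaussianPDF μ' v x := by
    intro x hx
    rw [gaussianPDF, gaussianPDF, ← ENNReal.ofReal_mul (Real.exp_nonneg ε)]
    refine ENNReal.ofReal_le_ofReal ?_
    rw [gaussianPDFReal, gaussianPDFReal]
    have hxt : x ≤ t := hx.2
    have hkey : (x - μ') ^ 2 - (x - μ) ^ 2 ≤ 2 * σ ^ 2 * ε := by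
      have h1 : x * c ≤ t * c := mul_le_mul_of_nonneg_right hxt hc.le
      have h2 : t * c = μ * c + σ ^ 2 * ε - c ^ 2 / 2 := by
        rw [htdef]; field_simp; ring
      have h3 : (x - μ') ^ 2 - (x - μ) ^ 2 = 2 * (x * c) + μ' ^ 2 - μ ^ 2 := by
        rw [hcdef]; ring
      have h4 : 2 * (μ * c) - c ^ 2 = μ ^ 2 - μ' ^ 2 := by rw [hcdef]; ring
      linarith
    have hexp : Real.exp (- (x - μ) ^ 2 / (2 * v)) ≤
        Real.exp (ε + - (x - μ') ^ 2 / (2 * v)) := by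
      rw [Real.exp_le_exp, hvcoe]
      have h3 : ((x - μ') ^ 2 - (x - μ) ^ 2) / (2 * σ ^ 2) ≤ ε := by
        rw [div_le_iff₀ (by positivity)]
        linarith
      rw [sub_div] at h3
      rw [neg_div, neg_div]
      linarith
    calc (Real.sqrt (2 * π * v))⁻¹ * Real.exp (- (x - μ) ^ 2 / (2 * v))
        ≤ (Real.sqrt (2 * π * v))⁻¹ * Real.exp (ε + - (x - μ') ^ 2 / (2 * v)) :=
          mul_le_mul_of_nonneg_left hexp (by positivity)
      _ = Real.exp ε * ((Real.sqrt (2 * π * v))⁻¹ * Real.exp (- (x - μ') ^ 2 / (2 * v))) := by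
          rw [Real.exp_add]; ring
  have hsplit : gaussianReal μ v O ≤
      gaussianReal μ v (O ∩ Set.Iic t) + gaussianReal μ v (Set.Ioi t) := by
    refine le_trans (measure_mono ?_) (measure_union_le _ _)
    intro x hx
    rcases le_or_gt x t with h | h
    · exact Or.inl ⟨hx, h⟩
    · exact Or.inr h
  have hmain : gaussianReal μ v (O ∩ Set.Iic t) ≤
      ENNReal.ofReal (Real.exp ε) * gaussianReal μ' v O := by
    rw [gaussianReal_apply μ hv, gaussianReal_apply μ' hv]
    calc ∫⁻ x in O ∩ Set.Iic t, gaussianPDF μ v x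
        ≤ ∫⁻ x in O ∩ Set.Iic t, ENNReal.ofReal (Real.exp ε) * gaussianPDF μ' v x :=
          setLIntegral_mono ((measurable_gaussianPDF μ' v).const_mul _) hpdf
      _ = ENNReal.ofReal (Real.exp ε) * ∫⁻ x in O ∩ Set.Iic t, gaussianPDF μ' v x :=
          lintegral_const_mul _ (measurable_gaussianPDF μ' v)
      _ ≤ ENNReal.ofReal (Real.exp ε) * ∫⁻ x in O, gaussianPDF μ' v x :=
          mul_le_mul_right (lintegral_mono_set Set.inter_subset_left) _
  have htail : gaussianReal μ v (Set.Ioi t) ≤ ENNReal.ofReal δ := by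
    rcases le_or_gt μ t with hA | hB
    · refine le_trans (gauss_tail_high μ t v hv hA) (ENNReal.ofReal_le_ofReal ?_)
      rw [hvcoe]
      exact arithA ε δ Δ σ c (t - μ) hε0 hε1 hδ0 hδ1 hΔ hc hcΔ hσε hσpos hw
    · refine le_trans (gauss_tail_low μ t v hv hB.le) (ENNReal.ofReal_le_ofReal ?_)
      rw [hvcoe]
      have hsqrtv : Real.sqrt (2 * π * σ ^ 2) = Real.sqrt (2 * π) * σ := by
        rw [Real.sqrt_mul (by positivity), Real.sqrt_sq hσpos.le]
      rw [hsqrtv]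
      have hmt : μ - t = -(t - μ) := by ring
      rw [hmt]
      exact arithB ε δ Δ σ c (t - μ) hε0 hε1 hδ0 hδ1 hΔ hc hcΔ hσε hσpos hw
        (by linarith)
  calc gaussianReal μ v O
      ≤ gaussianReal μ v (O ∩ Set.Iic t) + gaussianReal μ v (Set.Ioi t) := hsplit
    _ ≤ ENNReal.ofReal (Real.exp ε) * gaussianReal μ' v O + ENNReal.ofReal δ :=
        add_le_add hmain htail

/-- The one-dimensional Gaussian mechanism: for `ε, δ ∈ (0,1)`, sensitivity `Δ > 0`
and noise scale `σ ≥ Δ·√(2 ln(1.25/δ))/ε`, the Gaussian measures with means at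
distance at most `Δ` and variance `σ²` are `(ε, δ)`-indistinguishable. -/
theorem gaussian_mechanism_dp
    (ε δ Δ σ : ℝ) (hε : ε ∈ Set.Ioo (0 : ℝ) 1) (hδ : δ ∈ Set.Ioo (0 : ℝ) 1)
    (hΔ : 0 < Δ) (hσ : σ ≥ Δ * Real.sqrt (2 * Real.log (1.25 / δ)) / ε)
    (μ μ' : ℝ) (hμ : |μ - μ'| ≤ Δ) (O : Set ℝ) (hO : MeasurableSet O) :
    gaussianReal μ ⟨σ ^ 2, sq_nonneg σ⟩ O
      ≤ ENNReal.ofReal (Real.exp ε) * gaussianReal μ' ⟨σ ^ 2, sq_nonneg σ⟩ O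
        + ENNReal.ofReal δ := by
  rcases lt_trichotomy (μ - μ') 0 with hc | hc | hc
  · -- μ < μ' : use the reflection x ↦ -x
    set v : ℝ≥0 := (⟨σ ^ 2, sq_nonneg σ⟩ : ℝ≥0) with hvdef
    have hmap : ∀ m : ℝ, (gaussianReal m v).map (· * (-1)) = gaussianReal (-m) v := by
      intro m
      have h2 : (⟨(-1 : ℝ) ^ 2, sq_nonneg (-1 : ℝ)⟩ : ℝ≥0) = (1 : ℝ≥0) := by
        ext; norm_num
      rw [gaussianReal_map_mul_const (-1), neg_one_mul]
      congr 1; apply NNReal.eq; show (-1:ℝ)^2 * (v:ℝ) = v; norm_num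
    have hrefl : ∀ (m : ℝ) (S : Set ℝ), MeasurableSet S →
        gaussianReal m v S = gaussianReal (-m) v ((· * (-1 : ℝ)) ⁻¹' S) := by
      intro m S hS
      rw [← hmap m, Measure.map_apply (by fun_prop) (hS.preimage (by fun_prop))]
      congr 1
      ext x
      simp
    rw [hrefl μ O hO, hrefl μ' O hO]
    exact gauss_dp_key ε δ Δ σ hε hδ hΔ hσ (-μ) (-μ') (by linarith)
      (by rw [show -μ - -μ' = -(μ - μ') by ring, abs_neg]; exact hμ)
      _ (hO.preimage (by fun_prop))
  · -- μ = μ'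
    have hμμ' : μ = μ' := by linarith
    subst hμμ'
    have h1 : (1 : ℝ≥0∞) ≤ ENNReal.ofReal (Real.exp ε) := by
      rw [ENNReal.one_le_ofReal]
      exact Real.one_le_exp hε.1.le
    calc gaussianReal μ ⟨σ ^ 2, sq_nonneg σ⟩ O
        = 1 * gaussianReal μ ⟨σ ^ 2, sq_nonneg σ⟩ O := (one_mul _).symm
      _ ≤ ENNReal.ofReal (Real.exp ε) * gaussianReal μ ⟨σ ^ 2, sq_nonneg σ⟩ O :=
          mul_le_mul_left h1 _
      _ ≤ _ := le_self_add
  · exact gauss_dp_key ε δ Δ σ hε hδ hΔ hσ μ μ' hc hμ O hO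
end

section
/- Let ε ∈ (0,1), δ ∈ (0,1), Δ > 0, σ ≥ Δ·√(2·ln(1.25/δ))/ε, and let μ, μ' ∈ ℝ with |μ − μ'| ≤ Δ. Then the set of points where the log-likelihood ratio of N(μ, σ²) against N(μ', σ²) exceeds ε, namely { x ∈ ℝ : (x − μ')² − (x − μ)² > 2σ²ε }, has measure at most δ under the Gaussian measure gaussianReal μ σ². -/
open MeasureTheory ProbabilityTheory Real
open scoped NNReal ENNReal

lemma gauss_neg_map (v : ℝ≥0) : (gaussianReal 0 v).map (fun x => -x) = gaussianReal 0 v := by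
  have h := gaussianReal_map_const_mul (μ := 0) (v := v) (-1)
  simp only [neg_one_mul, mul_zero] at h
  convert h using 2
  ext
  simp

lemma gauss_symm (v : ℝ≥0) (w : ℝ) :
    gaussianReal 0 v (Set.Iio (-w)) = gaussianReal 0 v (Set.Ioi w) := by
  conv_lhs => rw [← gauss_neg_map v]
  rw [Measure.map_apply measurable_neg measurableSet_Iio]
  congr 1
  ext x
  simp

lemma gauss_shift (m : ℝ) (v : ℝ≥0) (s : Set ℝ) (hs : MeasurableSet s) :
    gaussianReal m v s = gaussianReal 0 v ((· + m) ⁻¹' s) := by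
  have h := gaussianReal_map_add_const (μ := 0) (v := v) m
  rw [zero_add] at h
  rw [← h, Measure.map_apply (measurable_add_const m) hs]

lemma gauss_half (m : ℝ) {v : ℝ≥0} (hv : v ≠ 0) :
    gaussianReal m v (Set.Ioi m) = 1/2 := by
  have hsh : gaussianReal m v (Set.Ioi m) = gaussianReal 0 v (Set.Ioi 0) := by
    rw [gauss_shift m v _ measurableSet_Ioi]
    congr 1; ext x; simp
  have hsymm : gaussianReal 0 v (Set.Iio 0) = gaussianReal 0 v (Set.Ioi 0) := by
    have := gauss_symm v 0; simpa using this
  have h0 : gaussianReal 0 v ({0} : Set ℝ) = 0 := by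
    refine gaussianReal_absolutelyContinuous 0 hv ?_
    simp
  have hIci : gaussianReal 0 v (Set.Ici 0) = gaussianReal 0 v (Set.Ioi 0) := by
    have : (Set.Ici (0:ℝ)) = {0} ∪ Set.Ioi 0 := by
      ext x; simp [le_iff_lt_or_eq, or_comm, eq_comm]
    rw [this]
    refine le_antisymm ?_ (measure_mono Set.subset_union_right)
    calc gaussianReal 0 v ({0} ∪ Set.Ioi 0) ≤ gaussianReal 0 v {0} + gaussianReal 0 v (Set.Ioi 0) :=
          measure_union_le _ _
      _ = gaussianReal 0 v (Set.Ioi 0) := by rw [h0, zero_add]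
  have hU : gaussianReal 0 v (Set.Ici 0) + gaussianReal 0 v (Set.Iio 0) = 1 := by
    rw [← measure_union_add_inter₀ (Set.Ici 0) measurableSet_Iio.nullMeasurableSet]
    have h1 : Set.Ici (0:ℝ) ∪ Set.Iio 0 = Set.univ := by
      ext x; simp [le_or_gt]
    have h2 : Set.Ici (0:ℝ) ∩ Set.Iio 0 = ∅ := by
      ext x; simp
    rw [h1, h2, measure_univ, measure_empty, add_zero]
  rw [hsh]
  rw [hIci, hsymm] at hU
  have : (2:ℝ≥0∞) * gaussianReal 0 v (Set.Ioi 0) = 1 := by rw [two_mul, hU]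
  rw [ENNReal.eq_div_iff (by norm_num) (by norm_num), this]

lemma gauss_tail {σ : ℝ} (hσ : 0 < σ) {t : ℝ} (ht : 0 ≤ t) :
    gaussianReal 0 ⟨σ^2, sq_nonneg σ⟩ (Set.Ioi t)
      ≤ ENNReal.ofReal (Real.exp (-t^2/(2*σ^2)) * (1/2)) := by
  set v : ℝ≥0 := ⟨σ^2, sq_nonneg σ⟩ with hvdef
  have hvr : (v:ℝ) = σ^2 := rfl
  have hv : v ≠ 0 := by
    intro h
    have := congrArg NNReal.toReal h
    rw [hvr] at this
    simp at this
    nlinarith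
  have hpt : ∀ x ∈ Set.Ioi t, gaussianPDF 0 v x
      ≤ ENNReal.ofReal (Real.exp (-t^2/(2*σ^2))) * gaussianPDF t v x := by
    intro x hx
    rw [Set.mem_Ioi] at hx
    rw [gaussianPDF, gaussianPDF, ← ENNReal.ofReal_mul (Real.exp_nonneg _)]
    apply ENNReal.ofReal_le_ofReal
    rw [gaussianPDFReal, gaussianPDFReal, hvr]
    have hC : (0:ℝ) ≤ (Real.sqrt (2 * π * σ^2))⁻¹ := by positivity
    have hE : Real.exp (-(x-0)^2/(2*σ^2))
        ≤ Real.exp (-t^2/(2*σ^2)) * Real.exp (-(x-t)^2/(2*σ^2)) := by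
      rw [← Real.exp_add, Real.exp_le_exp, ← add_div]
      have h2 : (0:ℝ) < 2*σ^2 := by positivity
      rw [div_le_div_iff₀ h2 h2]
      nlinarith [mul_nonneg ht (sub_pos.mpr hx).le]
    calc (Real.sqrt (2 * π * σ^2))⁻¹ * Real.exp (-(x-0)^2/(2*σ^2))
        ≤ (Real.sqrt (2 * π * σ^2))⁻¹
            * (Real.exp (-t^2/(2*σ^2)) * Real.exp (-(x-t)^2/(2*σ^2))) := by
          exact mul_le_mul_of_nonneg_left hE hC
      _ = Real.exp (-t^2/(2*σ^2)) * ((Real.sqrt (2 * π * σ^2))⁻¹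
            * Real.exp (-(x-t)^2/(2*σ^2))) := by ring
  calc gaussianReal 0 v (Set.Ioi t) = ∫⁻ x in Set.Ioi t, gaussianPDF 0 v x :=
        gaussianReal_apply 0 hv _
    _ ≤ ∫⁻ x in Set.Ioi t, ENNReal.ofReal (Real.exp (-t^2/(2*σ^2))) * gaussianPDF t v x :=
        setLIntegral_mono ((measurable_gaussianPDF t v).const_mul _) hpt
    _ = ENNReal.ofReal (Real.exp (-t^2/(2*σ^2))) * gaussianReal t v (Set.Ioi t) := by
        rw [lintegral_const_mul _ (measurable_gaussianPDF t v), ← gaussianReal_apply t hv]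
    _ = ENNReal.ofReal (Real.exp (-t^2/(2*σ^2)) * (1/2)) := by
        rw [gauss_half t hv, ENNReal.ofReal_mul (Real.exp_nonneg _)]
        congr 1
        rw [ENNReal.ofReal_div_of_pos (by norm_num)]
        norm_num

lemma gauss_tail_neg {σ : ℝ} (hσ : 0 < σ) {u : ℝ} (hu : u ≤ 0) :
    gaussianReal 0 ⟨σ^2, sq_nonneg σ⟩ (Set.Ioi u)
      ≤ ENNReal.ofReal (1/2 + (-u) * (Real.sqrt (2*π*σ^2))⁻¹) := by
  set v : ℝ≥0 := ⟨σ^2, sq_nonneg σ⟩ with hvdef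
  have hvr : (v:ℝ) = σ^2 := rfl
  have hv : v ≠ 0 := by
    intro h
    have := congrArg NNReal.toReal h
    rw [hvr] at this
    simp at this
    nlinarith
  have hC : (0:ℝ) ≤ (Real.sqrt (2*π*σ^2))⁻¹ := by positivity
  have hsplit : Set.Ioi u = Set.Ioc u 0 ∪ Set.Ioi (0:ℝ) := (Set.Ioc_union_Ioi_eq_Ioi hu).symm
  have hIoc : gaussianReal 0 v (Set.Ioc u 0) ≤ ENNReal.ofReal ((-u) * (Real.sqrt (2*π*σ^2))⁻¹) := by
    rw [gaussianReal_apply 0 hv]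
    calc ∫⁻ x in Set.Ioc u 0, gaussianPDF 0 v x
        ≤ ∫⁻ _ in Set.Ioc u 0, ENNReal.ofReal ((Real.sqrt (2*π*σ^2))⁻¹) := by
          refine setLIntegral_mono measurable_const fun x _ => ?_
          rw [gaussianPDF]
          apply ENNReal.ofReal_le_ofReal
          rw [gaussianPDFReal, hvr]
          have he1 : rexp (-(x-0)^2/(2*σ^2)) ≤ 1 :=
            Real.exp_le_one_iff.mpr (div_nonpos_of_nonpos_of_nonneg
              (neg_nonpos.mpr (sq_nonneg (x-0))) (by positivity))
          nlinarith [he1, hC, Real.exp_pos (-(x-0)^2/(2*σ^2))]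
      _ = ENNReal.ofReal ((Real.sqrt (2*π*σ^2))⁻¹) * volume (Set.Ioc u 0) := by
          rw [setLIntegral_const]
      _ ≤ ENNReal.ofReal ((-u) * (Real.sqrt (2*π*σ^2))⁻¹) := by
          rw [Real.volume_Ioc, ← ENNReal.ofReal_mul hC]
          apply ENNReal.ofReal_le_ofReal
          nlinarith [hC]
  calc gaussianReal 0 v (Set.Ioi u) ≤ gaussianReal 0 v (Set.Ioc u 0) + gaussianReal 0 v (Set.Ioi 0) := by
        rw [hsplit]; exact measure_union_le _ _
    _ ≤ ENNReal.ofReal ((-u) * (Real.sqrt (2*π*σ^2))⁻¹) + ENNReal.ofReal (1/2) := by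
        rw [gauss_half 0 hv]
        refine add_le_add hIoc ?_
        rw [ENNReal.ofReal_div_of_pos (by norm_num)]
        norm_num
    _ = ENNReal.ofReal (1/2 + (-u) * (Real.sqrt (2*π*σ^2))⁻¹) := by
        rw [← ENNReal.ofReal_add (by nlinarith [hC]) (by norm_num)]
        rw [add_comm]

lemma set_pos_form (a K m : ℝ) (ha : 0 < a) :
    {x : ℝ | a * (x - m) > K} = Set.Ioi (m + K / a) := by
  ext x
  simp only [Set.mem_setOf_eq, Set.mem_Ioi, gt_iff_lt]
  have : K < a * (x - m) ↔ K / a < x - m := by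
    rw [div_lt_iff₀ ha, mul_comm]
  rw [this]
  constructor <;> intro h <;> linarith

lemma set_neg_form (a K m : ℝ) (ha : a < 0) :
    {x : ℝ | a * (x - m) > K} = Set.Iio (m + K / a) := by
  ext x
  simp only [Set.mem_setOf_eq, Set.mem_Iio, gt_iff_lt]
  have : K < a * (x - m) ↔ x - m < K / a := by
    rw [lt_div_iff_of_neg ha, mul_comm]
  rw [this]
  constructor <;> intro h <;> linarith

set_option maxHeartbeats 1000000 in
/-- Tail bound on the privacy-loss random variable of the Gaussian mechanism:
with `σ ≥ Δ·√(2 ln(1.25/δ))/ε` and `|μ − μ'| ≤ Δ`, the set of points where the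
log-likelihood ratio of `N(μ, σ²)` against `N(μ', σ²)` exceeds `ε`, namely
`{x : (x − μ')² − (x − μ)² > 2σ²ε}`, has `gaussianReal μ σ²`-measure at most `δ`. -/
theorem gaussian_privacy_loss_tail
    (ε δ Δ σ : ℝ) (hε : ε ∈ Set.Ioo (0 : ℝ) 1) (hδ : δ ∈ Set.Ioo (0 : ℝ) 1)
    (hΔ : 0 < Δ) (hσ : σ ≥ Δ * Real.sqrt (2 * Real.log (1.25 / δ)) / ε)
    (μ μ' : ℝ) (hμ : |μ - μ'| ≤ Δ) :
    gaussianReal μ ⟨σ ^ 2, sq_nonneg σ⟩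
        {x : ℝ | (x - μ') ^ 2 - (x - μ) ^ 2 > 2 * σ ^ 2 * ε}
      ≤ ENNReal.ofReal δ := by
  obtain ⟨hε0, hε1⟩ := hε
  obtain ⟨hδ0, hδ1⟩ := hδ
  set L := Real.log (1.25 / δ) with hLdef
  have hL : 0 < L := Real.log_pos (by rw [lt_div_iff₀ hδ0]; linarith)
  set c := Real.sqrt (2 * L) with hcdef
  have hc : 0 < c := Real.sqrt_pos.mpr (by linarith)
  have hc2 : c ^ 2 = 2 * L := Real.sq_sqrt (by linarith)
  have hσ0 : 0 < σ := lt_of_lt_of_le (div_pos (mul_pos hΔ hc) hε0) hσ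
  have h1 : Δ * c ≤ σ * ε := by
    rw [ge_iff_le, div_le_iff₀ hε0] at hσ
    linarith
  have hexpL : Real.exp (-L) = δ / 1.25 := by
    rw [hLdef, ← Real.log_inv, inv_div, Real.exp_log (by positivity)]
  have hexpL25 : 1.25 * Real.exp (-L) = δ := by rw [hexpL]; ring
  clear_value L c
  by_cases ha : μ - μ' = 0
  · have hset : {x : ℝ | (x - μ') ^ 2 - (x - μ) ^ 2 > 2 * σ ^ 2 * ε} = ∅ := by
      have hμμ' : μ' = μ := by linarith [sub_eq_zero.mp ha]
      ext x
      simp only [Set.mem_setOf_eq, Set.mem_empty_iff_false, iff_false, not_lt, hμμ']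
      nlinarith [mul_pos (mul_pos (by norm_num : (0:ℝ) < 2) (pow_pos hσ0 2)) hε0]
    rw [hset]
    simp
  · have haabs : 0 < |μ - μ'| := abs_pos.mpr ha
    have hset0 : {x : ℝ | (x - μ') ^ 2 - (x - μ) ^ 2 > 2 * σ ^ 2 * ε}
        = {x : ℝ | (μ - μ') * (x - μ) > σ ^ 2 * ε - (μ - μ') ^ 2 / 2} := by
      ext x
      simp only [Set.mem_setOf_eq, gt_iff_lt]
      constructor <;> intro h <;> nlinarith [sq_nonneg (μ - μ'), h]
    have hmeas : gaussianReal μ (⟨σ ^ 2, sq_nonneg σ⟩ : ℝ≥0)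
          {x : ℝ | (μ - μ') * (x - μ) > σ ^ 2 * ε - (μ - μ') ^ 2 / 2}
        = gaussianReal 0 (⟨σ ^ 2, sq_nonneg σ⟩ : ℝ≥0)
            (Set.Ioi (σ ^ 2 * ε / |μ - μ'| - |μ - μ'| / 2)) := by
      rcases lt_or_gt_of_ne ha with haneg | hapos
      · have habs : |μ - μ'| = -(μ - μ') := abs_of_neg haneg
        have hKw : (σ ^ 2 * ε - (μ - μ') ^ 2 / 2) / (μ - μ')
            = -(σ ^ 2 * ε / |μ - μ'| - |μ - μ'| / 2) := by
          have ha2 : -μ + μ' ≠ 0 := fun h => ha (by linarith)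
          rw [habs]
          field_simp
          ring_nf
        rw [set_neg_form _ _ _ haneg]
        refine (gauss_shift μ _ _ measurableSet_Iio).trans ?_
        have hpre : (· + μ) ⁻¹' Set.Iio (μ + (σ ^ 2 * ε - (μ - μ') ^ 2 / 2) / (μ - μ'))
            = Set.Iio (-(σ ^ 2 * ε / |μ - μ'| - |μ - μ'| / 2)) := by
          ext x
          simp only [Set.mem_preimage, Set.mem_Iio]
          rw [← hKw]
          constructor <;> intro h <;> linarith
        rw [hpre]
        exact gauss_symm _ _
      · have habs : |μ - μ'| = μ - μ' := abs_of_pos hapos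
        have hKw : (σ ^ 2 * ε - (μ - μ') ^ 2 / 2) / (μ - μ')
            = σ ^ 2 * ε / |μ - μ'| - |μ - μ'| / 2 := by
          rw [habs]
          field_simp
        rw [set_pos_form _ _ _ hapos]
        refine (gauss_shift μ _ _ measurableSet_Ioi).trans ?_
        have hpre : (· + μ) ⁻¹' Set.Ioi (μ + (σ ^ 2 * ε - (μ - μ') ^ 2 / 2) / (μ - μ'))
            = Set.Ioi (σ ^ 2 * ε / |μ - μ'| - |μ - μ'| / 2) := by
          ext x
          simp only [Set.mem_preimage, Set.mem_Ioi]
          rw [← hKw]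
          constructor <;> intro h <;> linarith
        rw [hpre]
    rw [hset0, hmeas]
    -- main estimate on the tail at w
    set w := σ ^ 2 * ε / |μ - μ'| - |μ - μ'| / 2 with hwdef
    set s := c - ε / (2 * c) with hsdef
    have hs2 : 2 * c * s = 2 * c ^ 2 - ε := by
      rw [hsdef]
      field_simp
    clear_value s w
    have hws : σ * s ≤ w := by
      have e1 : σ ^ 2 * ε / Δ ≤ σ ^ 2 * ε / |μ - μ'| :=
        div_le_div_of_nonneg_left (by positivity) haabs hμ
      have hD : Δ * (σ ^ 2 * ε / Δ) = σ ^ 2 * ε := by field_simp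
      have e2 : σ * s ≤ σ ^ 2 * ε / Δ - Δ / 2 := by
        have hpos : (0:ℝ) < 2 * c * Δ := mul_pos (mul_pos two_pos hc) hΔ
        have key : (2 * c * Δ) * (σ * s) ≤ (2 * c * Δ) * (σ ^ 2 * ε / Δ - Δ / 2) := by
          have lhs_eq : (2 * c * Δ) * (σ * s) = Δ * σ * (2 * c ^ 2 - ε) := by
            calc (2 * c * Δ) * (σ * s) = Δ * σ * (2 * c * s) := by ring
              _ = Δ * σ * (2 * c ^ 2 - ε) := by rw [hs2]
          have rhs_eq : (2 * c * Δ) * (σ ^ 2 * ε / Δ - Δ / 2)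
              = 2 * c * (σ ^ 2 * ε) - c * Δ ^ 2 := by
            linear_combination (2 * c) * hD
          rw [lhs_eq, rhs_eq]
          nlinarith [mul_le_mul_of_nonneg_left h1 (mul_nonneg (mul_nonneg two_pos.le hc.le) hσ0.le),
            mul_le_mul_of_nonneg_left h1 hΔ.le]
        exact (mul_le_mul_iff_right₀ hpos).mp key
      have e3 : |μ - μ'| / 2 ≤ Δ / 2 := by linarith
      rw [hwdef]
      linarith
    rcases le_or_gt 0 s with hs0 | hs0
    · have hw0 : (0:ℝ) ≤ w := le_trans (mul_nonneg hσ0.le hs0) hws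
      refine le_trans (gauss_tail hσ0 hw0) (ENNReal.ofReal_le_ofReal ?_)
      have hw2 : σ ^ 2 * s ^ 2 ≤ w ^ 2 := by nlinarith [mul_nonneg hσ0.le hs0]
      have hs2L : 2 * L - 1 ≤ s ^ 2 := by nlinarith [hs2, hc2, sq_nonneg ε, sq_nonneg c, hc]
      have hexp1 : Real.exp (-w ^ 2 / (2 * σ ^ 2)) ≤ Real.exp (1/2) * Real.exp (-L) := by
        rw [← Real.exp_add]
        apply Real.exp_le_exp.mpr
        rw [div_le_iff₀ (by positivity : (0:ℝ) < 2 * σ ^ 2)]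
        nlinarith [hw2, hs2L, sq_nonneg σ, pow_pos hσ0 2]
      have hehalf : Real.exp (1/2 : ℝ) ≤ 2.5 := by
        have hsq : Real.exp (1/2 : ℝ) * Real.exp (1/2 : ℝ) = Real.exp 1 := by
          rw [← Real.exp_add]; norm_num
        nlinarith [hsq, Real.exp_one_lt_d9, Real.exp_pos (1/2 : ℝ)]
      have hmul := mul_le_mul_of_nonneg_right hehalf (Real.exp_nonneg (-L))
      linarith [hexp1, hmul, Real.exp_pos (-w ^ 2 / (2 * σ ^ 2)), hexpL25]
    · have hsu : σ * s ≤ 0 := by nlinarith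
      have hsub : Set.Ioi w ⊆ Set.Ioi (σ * s) := Set.Ioi_subset_Ioi hws
      refine le_trans (le_trans (measure_mono hsub) (gauss_tail_neg hσ0 hsu))
        (ENNReal.ofReal_le_ofReal ?_)
      have hcε : 2 * c ^ 2 < ε := by nlinarith [hs2, mul_pos hc (neg_pos.mpr hs0)]
      have hδbig : 15/16 ≤ δ := by
        have hL4 : L < 1/4 := by nlinarith [hc2]
        have hexpq : (3/4 : ℝ) ≤ Real.exp (-(1/4) : ℝ) := by
          have := Real.add_one_le_exp (-(1/4) : ℝ)
          linarith
        have h5 : Real.exp (-(1/4) : ℝ) ≤ Real.exp (-L) := Real.exp_le_exp.mpr (by linarith)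
        linarith [hexpL25, hexpq, h5]
      have hLlow : 1/5 < L := by
        have hlog : Real.log (δ / 1.25) ≤ δ / 1.25 - 1 :=
          Real.log_le_sub_one_of_pos (by positivity)
        have hneg : -L = Real.log (δ / 1.25) := by
          rw [hLdef, ← Real.log_inv, inv_div]
        have hq : δ / 1.25 = 4/5 * δ := by ring
        rw [hq] at hlog hneg
        linarith [hlog, hneg, hδ1]
      have hc25 : 2/5 < c ^ 2 := by nlinarith [hc2]
      have hs625 : s ^ 2 ≤ 5/8 := by
        have h4 : (2 * c * s) ^ 2 ≤ ε ^ 2 := by nlinarith [hs2, hcε, hε0]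
        nlinarith [h4, hε1, hε0, hc25, sq_nonneg s, mul_pos hc hc]
      set r := (-(σ * s)) * (Real.sqrt (2 * π * σ ^ 2))⁻¹ with hrdef
      have hXpos : (0:ℝ) < 2 * π * σ ^ 2 := by positivity
      have hsq : Real.sqrt (2 * π * σ ^ 2) ^ 2 = 2 * π * σ ^ 2 :=
        Real.sq_sqrt hXpos.le
      have hr0 : 0 ≤ r := mul_nonneg (by nlinarith) (by positivity)
      have hrr : r ^ 2 * (2 * π * σ ^ 2) = σ ^ 2 * s ^ 2 := by
        rw [hrdef, mul_pow, inv_pow, hsq]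
        field_simp
      clear_value r
      have hπ : (3.125 : ℝ) < π := by
        have := Real.pi_gt_d6
        linarith
      have h625 : (6.25:ℝ) * σ ^ 2 ≤ 2 * π * σ ^ 2 := by nlinarith [hπ, sq_nonneg σ]
      have step1 : r ^ 2 * (6.25 * σ ^ 2) ≤ σ ^ 2 * (5/8) := by
        have i1 := mul_le_mul_of_nonneg_left h625 (sq_nonneg r)
        have i2 := mul_le_mul_of_nonneg_left hs625 (sq_nonneg σ)
        linarith [i1, i2, hrr]
      have step1' : (r ^ 2 * 6.25) * σ ^ 2 ≤ (5/8) * σ ^ 2 := by linarith [step1]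
      have step2 : r ^ 2 * 6.25 ≤ 5/8 := le_of_mul_le_mul_right step1' (pow_pos hσ0 2)
      have hr2 : r ^ 2 ≤ 1/10 := by linarith [step2]
      have hr3 : r ≤ 1/3 := by nlinarith [hr2, hr0]
      linarith [hδbig, hr3]
end

section
/- Let (α, 𝒜) and (β, ℬ) be measurable spaces, let μ, μ' be probability measures on α, let ε ≥ 0 and δ ≥ 0, and suppose that for every measurable set O ⊆ α, μ(O) ≤ e^ε · μ'(O) + δ. Let κ be a Markov kernel from α to β. Then for every measurable set T ⊆ β, (μ bind κ)(T) ≤ e^ε · (μ' bind κ)(T) + δ, where (μ bind κ)(T) = ∫ κ(x)(T) dμ(x). That is, (ε, δ)-indistinguishability is preserved under randomized post-processing. -/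
open MeasureTheory ProbabilityTheory

/-- Randomized post-processing preserves `(ε, δ)`-indistinguishability: if
`μ(O) ≤ e^ε·μ'(O) + δ` for all measurable `O` and `κ` is a Markov kernel, then
the compositions `μ bind κ` and `μ' bind κ` satisfy the same inequality. -/
theorem randomized_post_processing_dp
    {α β : Type*} [MeasurableSpace α] [MeasurableSpace β]
    (μ μ' : Measure α) [IsProbabilityMeasure μ] [IsProbabilityMeasure μ']
    (ε δ : ℝ) (hε : 0 ≤ ε) (hδ : 0 ≤ δ)
    (h : ∀ O : Set α, MeasurableSet O →
      μ O ≤ ENNReal.ofReal (Real.exp ε) * μ' O + ENNReal.ofReal δ)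
    (κ : Kernel α β) [IsMarkovKernel κ] (T : Set β) (hT : MeasurableSet T) :
    μ.bind κ T ≤ ENNReal.ofReal (Real.exp ε) * μ'.bind κ T + ENNReal.ofReal δ := by
  open Set in
  set f : α → ℝ := fun x => (κ x T).toReal with hf
  have hfm : Measurable f := (Kernel.measurable_coe κ hT).ennreal_toReal
  have hf1 : ∀ x, f x ≤ 1 := fun x => by
    simpa [f] using ENNReal.toReal_le_of_le_ofReal zero_le_one
      (by simpa using prob_le_one (μ := κ x) (s := T))
  have hfnn : ∀ x, 0 ≤ f x := fun x => ENNReal.toReal_nonneg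
  have hempty : ∀ t : ℝ, 1 ≤ t → {a | t < f a} = (∅ : Set α) := fun t ht => by
    ext a; simp only [mem_setOf_eq, mem_empty_iff_false, iff_false, not_lt]
    exact (hf1 a).trans ht
  have key : ∀ (ν : Measure α), ν.bind κ T = ∫⁻ t in Ioo (0:ℝ) 1, ν {a | t < f a} := by
    intro ν
    rw [Measure.bind_apply hT κ.measurable.aemeasurable]
    have : ∫⁻ x, κ x T ∂ν = ∫⁻ x, ENNReal.ofReal (f x) ∂ν := by
      congr 1; ext x
      simp [f, ENNReal.ofReal_toReal (measure_ne_top (κ x) T)]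
    rw [this, lintegral_eq_lintegral_meas_lt ν (ae_of_all _ hfnn) hfm.aemeasurable]
    rw [← Ioo_union_Ici_eq_Ioi (zero_lt_one (α := ℝ)),
      lintegral_union measurableSet_Ici (by
        simp only [disjoint_left, mem_Ioo, mem_Ici]
        intro a ha h1; linarith [ha.2])]
    have hz : ∫⁻ t in Ici (1:ℝ), ν {a | t < f a} = 0 := by
      rw [setLIntegral_congr_fun measurableSet_Ici
        (fun t (ht : t ∈ Ici (1:ℝ)) => show ν {a | t < f a} = (fun _ => 0) t by rw [hempty t ht, measure_empty])]
      simp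
    rw [hz, add_zero]
  have hg : Measurable fun t : ℝ => μ' {a | t < f a} := by
    apply Antitone.measurable
    intro s t hst
    exact measure_mono fun a ha => lt_of_le_of_lt hst ha
  rw [key μ, key μ']
  calc ∫⁻ t in Ioo (0:ℝ) 1, μ {a | t < f a}
      ≤ ∫⁻ t in Ioo (0:ℝ) 1,
          (ENNReal.ofReal (Real.exp ε) * μ' {a | t < f a} + ENNReal.ofReal δ) :=
        lintegral_mono fun t => h _ (measurableSet_lt measurable_const hfm)
    _ = ENNReal.ofReal (Real.exp ε) * (∫⁻ t in Ioo (0:ℝ) 1, μ' {a | t < f a})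
          + ENNReal.ofReal δ * volume (Ioo (0:ℝ) 1) := by
        rw [lintegral_add_right _ measurable_const, lintegral_const_mul _ hg,
          setLIntegral_const]
    _ = ENNReal.ofReal (Real.exp ε) * (∫⁻ t in Ioo (0:ℝ) 1, μ' {a | t < f a})
          + ENNReal.ofReal δ := by
        simp [Real.volume_Ioo]
end

section
/- Let μ₁, μ₁' be probability measures on a measurable space α and μ₂, μ₂' be probability measures on a measurable space β. Suppose ε₁, ε₂, δ₁, δ₂ ≥ 0, that for every measurable O ⊆ α, μ₁(O) ≤ e^{ε₁} · μ₁'(O) + δ₁, and that for every measurable O ⊆ β, μ₂(O) ≤ e^{ε₂} · μ₂'(O) + δ₂. Then for every measurable set A ⊆ α × β, the product measures satisfy (μ₁ × μ₂)(A) ≤ e^{ε₁ + ε₂} · (μ₁' × μ₂')(A) + δ₁ + δ₂. That is, releasing the outputs of an (ε₁, δ₁)-DP mechanism and an independent (ε₂, δ₂)-DP mechanism together satisfies (ε₁ + ε₂, δ₁ + δ₂)-differential privacy. -/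
open MeasureTheory ENNReal

open Set in
/-- Integral version of `(ε, δ)`-indistinguishability, for functions bounded by `1`. -/
lemma lintegral_dp_le
    {α : Type*} [MeasurableSpace α]
    (μ μ' : Measure α) [IsProbabilityMeasure μ] [IsProbabilityMeasure μ']
    (ε δ : ℝ) (hδ : 0 ≤ δ)
    (h : ∀ O : Set α, MeasurableSet O →
      μ O ≤ ENNReal.ofReal (Real.exp ε) * μ' O + ENNReal.ofReal δ)
    (f : α → ℝ≥0∞) (hf : Measurable f) (hf1 : ∀ x, f x ≤ 1) :
    ∫⁻ x, f x ∂μ ≤ ENNReal.ofReal (Real.exp ε) * (∫⁻ x, f x ∂μ') + ENNReal.ofReal δ := by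
  set g : α → ℝ := fun x => (f x).toReal with hg
  have hfne : ∀ x, f x ≠ ∞ := fun x => ((hf1 x).trans_lt ENNReal.one_lt_top).ne
  have hg_nn : 0 ≤ g := fun x => ENNReal.toReal_nonneg
  have hg_mble : Measurable g := hf.ennreal_toReal
  have hofg : ∀ x, ENNReal.ofReal (g x) = f x := fun x => ENNReal.ofReal_toReal (hfne x)
  have hg1 : ∀ x, g x ≤ 1 := fun x => by
    simpa using ENNReal.toReal_mono ENNReal.one_ne_top (hf1 x)
  have key : ∀ (ν : Measure α), ∫⁻ x, f x ∂ν = ∫⁻ t in Ioi (0:ℝ), ν {a | t < g a} := by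
    intro ν
    rw [← lintegral_eq_lintegral_meas_lt ν (Filter.Eventually.of_forall hg_nn)
      hg_mble.aemeasurable]
    simp_rw [hofg]
  -- on `Ici 1` the superlevel sets are empty
  have hempty : ∀ t : ℝ, 1 ≤ t → {a | t < g a} = (∅ : Set α) := by
    intro t ht
    ext a
    simp only [Set.mem_setOf_eq, Set.mem_empty_iff_false, iff_false, not_lt]
    exact (hg1 a).trans ht
  have hsplit : ∀ (ν : Measure α),
      ∫⁻ t in Ioi (0:ℝ), ν {a | t < g a} = ∫⁻ t in Ioo (0:ℝ) 1, ν {a | t < g a} := by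
    intro ν
    have : Ioi (0:ℝ) = Ioo (0:ℝ) 1 ∪ Ici (1:ℝ) := by
      ext t; simp only [mem_Ioi, mem_union, mem_Ioo, mem_Ici]
      constructor
      · intro ht
        rcases lt_or_ge t 1 with h1 | h1
        · exact Or.inl ⟨ht, h1⟩
        · exact Or.inr h1
      · rintro (⟨h1, _⟩ | h1)
        · exact h1
        · linarith
    rw [this, lintegral_union measurableSet_Ici
      (Set.disjoint_left.mpr fun t ht h1 => ht.2.not_ge h1)]
    rw [setLIntegral_congr_fun measurableSet_Ici
        (fun t ht => by rw [hempty t ht])]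
    simp
  have hmble_set : ∀ t : ℝ, MeasurableSet {a | t < g a} := fun t =>
    measurableSet_lt measurable_const hg_mble
  calc ∫⁻ x, f x ∂μ = ∫⁻ t in Ioo (0:ℝ) 1, μ {a | t < g a} := by rw [key, hsplit]
    _ ≤ ∫⁻ t in Ioo (0:ℝ) 1,
        (ENNReal.ofReal (Real.exp ε) * μ' {a | t < g a} + ENNReal.ofReal δ) := by
        refine setLIntegral_mono' measurableSet_Ioo fun t _ => h _ (hmble_set t)
    _ = ENNReal.ofReal (Real.exp ε) * (∫⁻ t in Ioo (0:ℝ) 1, μ' {a | t < g a})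
        + ENNReal.ofReal δ * volume (Ioo (0:ℝ) 1) := by
        have hanti : Antitone (fun t : ℝ => μ' {a | t < g a}) := fun s t hst =>
          measure_mono fun a ha => lt_of_le_of_lt hst ha
        rw [lintegral_add_right _ measurable_const, lintegral_const,
          lintegral_const_mul _ hanti.measurable, Measure.restrict_apply_univ]
    _ = ENNReal.ofReal (Real.exp ε) * (∫⁻ x, f x ∂μ') + ENNReal.ofReal δ := by
        rw [key, hsplit, Real.volume_Ioo, sub_zero, ENNReal.ofReal_one, mul_one]
  
/-- Basic composition for independent mechanisms: if `μ₁, μ₁'` are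
`(ε₁, δ₁)`-indistinguishable and `μ₂, μ₂'` are `(ε₂, δ₂)`-indistinguishable,
then the product measures are `(ε₁ + ε₂, δ₁ + δ₂)`-indistinguishable. -/
theorem composition_dp
    {α β : Type*} [MeasurableSpace α] [MeasurableSpace β]
    (μ₁ μ₁' : Measure α) [IsProbabilityMeasure μ₁] [IsProbabilityMeasure μ₁']
    (μ₂ μ₂' : Measure β) [IsProbabilityMeasure μ₂] [IsProbabilityMeasure μ₂']
    (ε₁ ε₂ δ₁ δ₂ : ℝ) (hε₁ : 0 ≤ ε₁) (hε₂ : 0 ≤ ε₂) (hδ₁ : 0 ≤ δ₁) (hδ₂ : 0 ≤ δ₂)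
    (h₁ : ∀ O : Set α, MeasurableSet O →
      μ₁ O ≤ ENNReal.ofReal (Real.exp ε₁) * μ₁' O + ENNReal.ofReal δ₁)
    (h₂ : ∀ O : Set β, MeasurableSet O →
      μ₂ O ≤ ENNReal.ofReal (Real.exp ε₂) * μ₂' O + ENNReal.ofReal δ₂)
    (A : Set (α × β)) (hA : MeasurableSet A) :
    (μ₁.prod μ₂) A
      ≤ ENNReal.ofReal (Real.exp (ε₁ + ε₂)) * (μ₁'.prod μ₂') A
        + ENNReal.ofReal δ₁ + ENNReal.ofReal δ₂ := by
  have hmble : Measurable fun x => μ₂' (Prod.mk x ⁻¹' A) :=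
    measurable_measure_prodMk_left hA
  set G : α → ℝ≥0∞ := fun x => min (ENNReal.ofReal (Real.exp ε₂) * μ₂' (Prod.mk x ⁻¹' A)) 1
    with hGdef
  have hG_mble : Measurable G := (measurable_const.mul hmble).min measurable_const
  have hG1 : ∀ x, G x ≤ 1 := fun x => min_le_right _ _
  have step1 : ∀ x, μ₂ (Prod.mk x ⁻¹' A) ≤ G x + ENNReal.ofReal δ₂ := by
    intro x
    rcases le_total (ENNReal.ofReal (Real.exp ε₂) * μ₂' (Prod.mk x ⁻¹' A)) 1 with hle | hle
    · rw [hGdef]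
      simp only [min_eq_left hle]
      exact h₂ _ (measurable_prodMk_left hA)
    · calc μ₂ (Prod.mk x ⁻¹' A) ≤ 1 := prob_le_one
        _ ≤ G x + ENNReal.ofReal δ₂ := by
          rw [hGdef]; simp only [min_eq_right hle]; exact le_self_add
  have step2 : (μ₁.prod μ₂) A ≤ (∫⁻ x, G x ∂μ₁) + ENNReal.ofReal δ₂ := by
    rw [Measure.prod_apply hA]
    calc ∫⁻ x, μ₂ (Prod.mk x ⁻¹' A) ∂μ₁ ≤ ∫⁻ x, (G x + ENNReal.ofReal δ₂) ∂μ₁ :=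
          lintegral_mono step1
      _ = (∫⁻ x, G x ∂μ₁) + ENNReal.ofReal δ₂ := by
          rw [lintegral_add_right _ measurable_const, lintegral_const, measure_univ, mul_one]
  have step3 : (∫⁻ x, G x ∂μ₁) ≤ ENNReal.ofReal (Real.exp ε₁) * (∫⁻ x, G x ∂μ₁')
      + ENNReal.ofReal δ₁ :=
    lintegral_dp_le μ₁ μ₁' ε₁ δ₁ hδ₁ h₁ G hG_mble hG1
  have step4 : (∫⁻ x, G x ∂μ₁') ≤ ENNReal.ofReal (Real.exp ε₂) * (μ₁'.prod μ₂') A := by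
    rw [Measure.prod_apply hA, ← lintegral_const_mul _ hmble]
    exact lintegral_mono fun x => min_le_left _ _
  calc (μ₁.prod μ₂) A ≤ (∫⁻ x, G x ∂μ₁) + ENNReal.ofReal δ₂ := step2
    _ ≤ (ENNReal.ofReal (Real.exp ε₁) * (∫⁻ x, G x ∂μ₁') + ENNReal.ofReal δ₁)
        + ENNReal.ofReal δ₂ := add_le_add_left step3 _
    _ ≤ (ENNReal.ofReal (Real.exp ε₁) * (ENNReal.ofReal (Real.exp ε₂) * (μ₁'.prod μ₂') A)
        + ENNReal.ofReal δ₁) + ENNReal.ofReal δ₂ := by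
        gcongr
    _ = ENNReal.ofReal (Real.exp (ε₁ + ε₂)) * (μ₁'.prod μ₂') A
        + ENNReal.ofReal δ₁ + ENNReal.ofReal δ₂ := by
        rw [Real.exp_add, ENNReal.ofReal_mul (Real.exp_pos ε₁).le, mul_assoc]
end

section
/- Let ι be a nonempty finite index set, λ > 0, C ≥ 0, and let s, s' : ι → ℝ satisfy |s i − s' i| ≤ C for every i ∈ ι. Then for every i ∈ ι, the softmax probabilities satisfy exp(s i / λ) / (∑_{j ∈ ι} exp(s j / λ)) ≤ exp(2C/λ) · exp(s' i / λ) / (∑_{j ∈ ι} exp(s' j / λ)). In particular, with λ = 2C/ε, the exponential mechanism selecting an index from a finite candidate set with probability proportional to exp(ε · s i / (2C)), where the score function has sensitivity at most C, is ε-differentially private. -/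
open Finset

/-- The exponential mechanism (softmax selection) is differentially private: if
two score functions `s, s'` on a nonempty finite candidate set differ by at most
`C` at every index, then for every index `i` the softmax probability at scale
`lam` under `s` is at most `exp(2C/lam)` times that under `s'`. -/
theorem softmax_exponential_mechanism_dp
    {ι : Type*} [Fintype ι] [Nonempty ι]
    (lam : ℝ) (hlam : 0 < lam) (C : ℝ) (hC : 0 ≤ C)
    (s s' : ι → ℝ) (h : ∀ i, |s i - s' i| ≤ C) (i : ι) :
    Real.exp (s i / lam) / (∑ j, Real.exp (s j / lam))
      ≤ Real.exp (2 * C / lam)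
          * (Real.exp (s' i / lam) / (∑ j, Real.exp (s' j / lam))) := by
  set A := ∑ j, Real.exp (s j / lam) with hA
  set B := ∑ j, Real.exp (s' j / lam) with hB
  have hApos : 0 < A := Finset.sum_pos (fun j _ => Real.exp_pos _) univ_nonempty
  have hBpos : 0 < B := Finset.sum_pos (fun j _ => Real.exp_pos _) univ_nonempty
  have hnum : Real.exp (s i / lam) ≤ Real.exp (C / lam) * Real.exp (s' i / lam) := by
    rw [← Real.exp_add]
    apply Real.exp_le_exp.2
    have := (abs_le.1 (h i)).2
    rw [← add_div, div_le_div_iff_of_pos_right hlam]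
    linarith
  have hden : B ≤ Real.exp (C / lam) * A := by
    rw [Finset.mul_sum]
    apply Finset.sum_le_sum
    intro j _
    rw [← Real.exp_add, Real.exp_le_exp]
    have := (abs_le.1 (h j)).1
    rw [← add_div, div_le_div_iff_of_pos_right hlam]
    linarith
  have h2 : Real.exp (2 * C / lam) = Real.exp (C / lam) * Real.exp (C / lam) := by
    rw [← Real.exp_add]; ring_nf
  rw [div_le_iff₀ hApos, h2]
  have key : Real.exp (s i / lam) * B ≤
      (Real.exp (C / lam) * Real.exp (s' i / lam)) * (Real.exp (C / lam) * A) :=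
    mul_le_mul hnum hden hBpos.le (by positivity)
  have := (div_le_div_iff_of_pos_right hBpos).2 key
  calc Real.exp (s i / lam) = Real.exp (s i / lam) * B / B := by
        field_simp
    _ ≤ (Real.exp (C / lam) * Real.exp (s' i / lam)) * (Real.exp (C / lam) * A) / B :=
        this
    _ = Real.exp (C / lam) * Real.exp (C / lam) * (Real.exp (s' i / lam) / B) * A := by
        ring
end

section
/- Let σ > 0, Δ > 0, ε ≥ 0, and let Φ denote the cumulative distribution function of the standard Gaussian measure gaussianReal 0 1 on ℝ. Then the supremum over measurable sets S ⊆ ℝ of gaussianReal 0 σ² (S) − e^ε · gaussianReal Δ σ² (S) equals Φ(Δ/(2σ) − ε·σ/Δ) − e^ε · Φ(−Δ/(2σ) − ε·σ/Δ). Consequently, the one-dimensional Gaussian mechanism with noise standard deviation σ on a statistic of sensitivity Δ is (ε, δ)-differentially private if and only if Φ(Δ/(2σ) − ε·σ/Δ) − e^ε · Φ(−Δ/(2σ) − ε·σ/Δ) ≤ δ. -/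
open MeasureTheory ProbabilityTheory
open scoped NNReal ENNReal

/-- The cumulative distribution function `Φ` of the standard Gaussian measure. -/
noncomputable def stdGaussianCDF (x : ℝ) : ℝ :=
  (gaussianReal 0 1 (Set.Iic x)).toReal

open Real in
private lemma agm_gauss_map (σ m : ℝ) :
    (gaussianReal 0 1).map (fun x => σ * x + m) = gaussianReal m ⟨σ^2, sq_nonneg σ⟩ := by
  have h1 := gaussianReal_map_const_mul (μ := 0) (v := 1) σ
  have h2 := gaussianReal_map_add_const (μ := σ * 0) (v := NNReal.mk (σ^2) (sq_nonneg σ) * 1) m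
  have hc : (fun x : ℝ => σ * x + m) = (fun x : ℝ => x + m) ∘ (fun x : ℝ => σ * x) := rfl
  rw [hc, ← Measure.map_map (measurable_id'.add_const m) (measurable_const_mul σ), h1, h2]
  congr 1
  · ring
  · exact mul_one _

private lemma agm_gauss_Iic (σ m r : ℝ) (hσ : 0 < σ) :
    gaussianReal m ⟨σ^2, sq_nonneg σ⟩ (Set.Iic r) = gaussianReal 0 1 (Set.Iic ((r - m)/σ)) := by
  rw [← agm_gauss_map σ m, Measure.map_apply (by fun_prop) measurableSet_Iic]
  congr 1
  ext x
  simp only [Set.mem_preimage, Set.mem_Iic]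
  rw [le_div_iff₀ hσ]
  constructor <;> intro h <;> nlinarith [mul_comm σ x]

private lemma agm_gauss_Iio (m x : ℝ) {v : ℝ≥0} (hv : v ≠ 0) :
    gaussianReal m v (Set.Iio x) = gaussianReal m v (Set.Iic x) := by
  rw [← Set.Iio_union_right, measure_union (by simp) (measurableSet_singleton x),
    gaussianReal_absolutelyContinuous m hv (measure_singleton x), add_zero]

private lemma agm_gauss_Ici (σ m r : ℝ) (hσ : 0 < σ) :
    (gaussianReal m ⟨σ^2, sq_nonneg σ⟩ (Set.Ici r)).toReal = 1 - stdGaussianCDF ((r - m)/σ) := by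
  have hv : @Ne ℝ≥0 ⟨σ^2, sq_nonneg σ⟩ 0 :=
    fun h => (pow_pos hσ 2).ne' (congrArg NNReal.toReal h)
  haveI : IsProbabilityMeasure (gaussianReal m ⟨σ^2, sq_nonneg σ⟩) :=
    inferInstanceAs (IsProbabilityMeasure (gaussianReal m (NNReal.mk (σ^2) (sq_nonneg σ))))
  rw [← Set.compl_Iio, measure_compl measurableSet_Iio (measure_ne_top _ _),
    agm_gauss_Iio m r hv, agm_gauss_Iic σ m r hσ]
  rw [measure_univ, ENNReal.toReal_sub_of_le prob_le_one ENNReal.one_ne_top]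
  simp [stdGaussianCDF]

open Real in
private lemma agm_stdGaussianCDF_neg (x : ℝ) : stdGaussianCDF (-x) = 1 - stdGaussianCDF x := by
  have hmap : (gaussianReal 0 1).map (fun y : ℝ => -1 * y) = gaussianReal 0 1 := by
    rw [gaussianReal_map_const_mul]
    norm_num
  have h1 : gaussianReal 0 1 (Set.Iic (-x)) = gaussianReal 0 1 (Set.Ici x) := by
    conv_lhs => rw [← hmap]
    rw [Measure.map_apply (by fun_prop) measurableSet_Iic]
    congr 1
    ext y
    simp only [Set.mem_preimage, Set.mem_Iic, Set.mem_Ici]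
    constructor <;> intro h <;> linarith
  have h2 := agm_gauss_Ici 1 0 x one_pos
  have h3 : @Eq ℝ≥0 ⟨(1:ℝ)^2, sq_nonneg 1⟩ 1 := NNReal.eq (show (1:ℝ)^2 = 1 by norm_num)
  rw [h3] at h2
  rw [stdGaussianCDF, h1, h2]
  norm_num

open Real in
private lemma agm_gauss_sign (σ Δ ε : ℝ) (hσ : 0 < σ) (hΔ : 0 < Δ) (x : ℝ) :
    rexp ε * gaussianPDFReal Δ ⟨σ^2, sq_nonneg σ⟩ x ≤ gaussianPDFReal 0 ⟨σ^2, sq_nonneg σ⟩ x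
      ↔ x ≤ Δ/2 - ε * σ^2 / Δ := by
  unfold gaussianPDFReal
  simp only [NNReal.toReal]
  have hc : 0 < (√(2 * π * σ^2))⁻¹ := by
    have := Real.pi_pos; positivity
  rw [mul_left_comm, mul_le_mul_iff_right₀ hc, ← Real.exp_add, Real.exp_le_exp]
  have h2 : (0:ℝ) < 2 * σ^2 := by positivity
  rw [show ε + -(x - Δ)^2/(2*σ^2) ≤ -(x-0)^2/(2*σ^2) ↔
      ε ≤ -(x-0)^2/(2*σ^2) - (-(x - Δ)^2/(2*σ^2)) from by constructor <;> intro <;> linarith,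
    show -(x-0)^2/(2*σ^2) - (-(x - Δ)^2/(2*σ^2)) = (Δ^2 - 2*Δ*x)/(2*σ^2) from by ring,
    le_div_iff₀ h2]
  rw [show x ≤ Δ/2 - ε * σ^2 / Δ ↔ Δ * x ≤ Δ * (Δ/2 - ε * σ^2/Δ) from
    (mul_le_mul_iff_right₀ hΔ).symm]
  have : Δ * (Δ/2 - ε * σ^2/Δ) = Δ^2/2 - ε * σ^2 := by field_simp
  rw [this]
  constructor <;> intro h <;> nlinarith

private lemma agm_key_bound (f : ℝ → ℝ) (T : Set ℝ) (hfi : MeasureTheory.Integrable f)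
    (hT : MeasurableSet T) (hpos : ∀ x ∈ T, 0 ≤ f x) (hneg : ∀ x ∉ T, f x ≤ 0)
    (S : Set ℝ) (hS : MeasurableSet S) :
    ∫ x in S, f x ≤ ∫ x in T, f x := by
  have h1 : (∫ x in S ∩ T, f x) + ∫ x in S \ T, f x = ∫ x in S, f x :=
    integral_inter_add_diff hT hfi.integrableOn
  have h2 : ∫ x in S \ T, f x ≤ 0 :=
    setIntegral_nonpos (hS.diff hT) (fun x hx => hneg x hx.2)
  have h3 : ∫ x in S ∩ T, f x ≤ ∫ x in T, f x :=
    setIntegral_mono_set hfi.integrableOn ((ae_restrict_iff' hT).2 (ae_of_all _ hpos))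
      (HasSubset.Subset.eventuallyLE Set.inter_subset_right)
  linarith

open Real in
/-- Analytic Gaussian mechanism (Balle–Wang): the supremum over measurable sets
`S` of `N(0,σ²)(S) − e^ε·N(Δ,σ²)(S)` equals
`Φ(Δ/(2σ) − εσ/Δ) − e^ε·Φ(−Δ/(2σ) − εσ/Δ)`; consequently the one-dimensional
Gaussian mechanism with noise scale `σ` at sensitivity `Δ` is `(ε, δ)`-DP
(i.e. `N(0,σ²)` and `N(Δ,σ²)` are mutually `(ε, δ)`-indistinguishable) iff
this quantity is at most `δ`. -/
theorem analytic_gaussian_mechanism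
    (σ Δ ε δ : ℝ) (hσ : 0 < σ) (hΔ : 0 < Δ) (hε : 0 ≤ ε) (hδ : 0 ≤ δ) :
    (⨆ (S : Set ℝ) (_ : MeasurableSet S),
        ((gaussianReal 0 ⟨σ ^ 2, sq_nonneg σ⟩ S).toReal
          - Real.exp ε * (gaussianReal Δ ⟨σ ^ 2, sq_nonneg σ⟩ S).toReal))
      = stdGaussianCDF (Δ / (2 * σ) - ε * σ / Δ)
          - Real.exp ε * stdGaussianCDF (-(Δ / (2 * σ)) - ε * σ / Δ) ∧
    ((∀ S : Set ℝ, MeasurableSet S →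
        gaussianReal 0 ⟨σ ^ 2, sq_nonneg σ⟩ S
            ≤ ENNReal.ofReal (Real.exp ε) * gaussianReal Δ ⟨σ ^ 2, sq_nonneg σ⟩ S
              + ENNReal.ofReal δ ∧
          gaussianReal Δ ⟨σ ^ 2, sq_nonneg σ⟩ S
            ≤ ENNReal.ofReal (Real.exp ε) * gaussianReal 0 ⟨σ ^ 2, sq_nonneg σ⟩ S
              + ENNReal.ofReal δ)
      ↔ stdGaussianCDF (Δ / (2 * σ) - ε * σ / Δ)
          - Real.exp ε * stdGaussianCDF (-(Δ / (2 * σ)) - ε * σ / Δ) ≤ δ) := by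
  have hσ' : σ ≠ 0 := hσ.ne'
  have hΔ' : Δ ≠ 0 := hΔ.ne'
  have hv : @Ne ℝ≥0 ⟨σ^2, sq_nonneg σ⟩ 0 :=
    fun h => (pow_pos hσ 2).ne' (congrArg NNReal.toReal h)
  have hpi := integrable_gaussianPDFReal 0 (⟨σ^2, sq_nonneg σ⟩ : ℝ≥0)
  have hqi := integrable_gaussianPDFReal Δ (⟨σ^2, sq_nonneg σ⟩ : ℝ≥0)
  have hfi : MeasureTheory.Integrable (fun x => gaussianPDFReal 0 ⟨σ^2, sq_nonneg σ⟩ x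
      - rexp ε * gaussianPDFReal Δ ⟨σ^2, sq_nonneg σ⟩ x) := hpi.sub (hqi.const_mul _)
  have hgi : MeasureTheory.Integrable (fun x => gaussianPDFReal Δ ⟨σ^2, sq_nonneg σ⟩ x
      - rexp ε * gaussianPDFReal 0 ⟨σ^2, sq_nonneg σ⟩ x) := hqi.sub (hpi.const_mul _)
  have hPto : ∀ (m : ℝ) (S : Set ℝ), (gaussianReal m ⟨σ^2, sq_nonneg σ⟩ S).toReal
      = ∫ x in S, gaussianPDFReal m ⟨σ^2, sq_nonneg σ⟩ x := by
    intro m S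
    rw [gaussianReal_apply_eq_integral m hv S]
    exact ENNReal.toReal_ofReal (integral_nonneg fun x => gaussianPDFReal_nonneg m _ x)
  -- sign facts
  have hsign1 := agm_gauss_sign σ Δ ε hσ hΔ
  have hrefl1 : ∀ x : ℝ, gaussianPDFReal 0 ⟨σ^2, sq_nonneg σ⟩ x
      = gaussianPDFReal Δ ⟨σ^2, sq_nonneg σ⟩ (Δ - x) := by
    intro x; unfold gaussianPDFReal; ring_nf
  have hrefl2 : ∀ x : ℝ, gaussianPDFReal Δ ⟨σ^2, sq_nonneg σ⟩ x
      = gaussianPDFReal 0 ⟨σ^2, sq_nonneg σ⟩ (Δ - x) := by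
    intro x; unfold gaussianPDFReal; ring_nf
  have hsign2 : ∀ x : ℝ, rexp ε * gaussianPDFReal 0 ⟨σ^2, sq_nonneg σ⟩ x
      ≤ gaussianPDFReal Δ ⟨σ^2, sq_nonneg σ⟩ x ↔ Δ - (Δ/2 - ε * σ^2 / Δ) ≤ x := by
    intro x
    rw [hrefl1 x, hrefl2 x, hsign1 (Δ - x)]
    constructor <;> intro h <;> linarith
  -- the optimal sets
  have key1 : ∀ S : Set ℝ, MeasurableSet S →
      (∫ x in S, (gaussianPDFReal 0 ⟨σ^2, sq_nonneg σ⟩ x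
        - rexp ε * gaussianPDFReal Δ ⟨σ^2, sq_nonneg σ⟩ x))
      ≤ ∫ x in Set.Iic (Δ/2 - ε * σ^2 / Δ), (gaussianPDFReal 0 ⟨σ^2, sq_nonneg σ⟩ x
        - rexp ε * gaussianPDFReal Δ ⟨σ^2, sq_nonneg σ⟩ x) :=
    fun S hS => agm_key_bound _ _ hfi measurableSet_Iic
      (fun x hx => sub_nonneg.2 ((hsign1 x).2 hx))
      (fun x hx => sub_nonpos.2 (not_le.1 fun h => hx ((hsign1 x).1 h)).le) S hS
  have key2 : ∀ S : Set ℝ, MeasurableSet S →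
      (∫ x in S, (gaussianPDFReal Δ ⟨σ^2, sq_nonneg σ⟩ x
        - rexp ε * gaussianPDFReal 0 ⟨σ^2, sq_nonneg σ⟩ x))
      ≤ ∫ x in Set.Ici (Δ - (Δ/2 - ε * σ^2 / Δ)), (gaussianPDFReal Δ ⟨σ^2, sq_nonneg σ⟩ x
        - rexp ε * gaussianPDFReal 0 ⟨σ^2, sq_nonneg σ⟩ x) :=
    fun S hS => agm_key_bound _ _ hgi measurableSet_Ici
      (fun x hx => sub_nonneg.2 ((hsign2 x).2 hx))
      (fun x hx => sub_nonpos.2 (not_le.1 fun h => hx ((hsign2 x).1 h)).le) S hS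
  -- splitting integrals
  have hsplit1 : ∀ S : Set ℝ,
      (∫ x in S, (gaussianPDFReal 0 ⟨σ^2, sq_nonneg σ⟩ x
        - rexp ε * gaussianPDFReal Δ ⟨σ^2, sq_nonneg σ⟩ x))
      = (gaussianReal 0 ⟨σ^2, sq_nonneg σ⟩ S).toReal
        - rexp ε * (gaussianReal Δ ⟨σ^2, sq_nonneg σ⟩ S).toReal := by
    intro S
    rw [integral_sub hpi.integrableOn ((hqi.const_mul _).integrableOn),
      integral_const_mul, hPto 0 S, hPto Δ S]
  have hsplit2 : ∀ S : Set ℝ,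
      (∫ x in S, (gaussianPDFReal Δ ⟨σ^2, sq_nonneg σ⟩ x
        - rexp ε * gaussianPDFReal 0 ⟨σ^2, sq_nonneg σ⟩ x))
      = (gaussianReal Δ ⟨σ^2, sq_nonneg σ⟩ S).toReal
        - rexp ε * (gaussianReal 0 ⟨σ^2, sq_nonneg σ⟩ S).toReal := by
    intro S
    rw [integral_sub hqi.integrableOn ((hpi.const_mul _).integrableOn),
      integral_const_mul, hPto 0 S, hPto Δ S]
  -- values at the optimal sets
  have hPt : (gaussianReal 0 ⟨σ^2, sq_nonneg σ⟩ (Set.Iic (Δ/2 - ε * σ^2 / Δ))).toReal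
      = stdGaussianCDF (Δ / (2 * σ) - ε * σ / Δ) := by
    rw [agm_gauss_Iic σ 0 (Δ/2 - ε * σ^2 / Δ) hσ,
      show (Δ/2 - ε * σ^2 / Δ - 0)/σ = Δ / (2 * σ) - ε * σ / Δ from by field_simp; ring]
    rfl
  have hQt : (gaussianReal Δ ⟨σ^2, sq_nonneg σ⟩ (Set.Iic (Δ/2 - ε * σ^2 / Δ))).toReal
      = stdGaussianCDF (-(Δ / (2 * σ)) - ε * σ / Δ) := by
    rw [agm_gauss_Iic σ Δ (Δ/2 - ε * σ^2 / Δ) hσ,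
      show (Δ/2 - ε * σ^2 / Δ - Δ)/σ = -(Δ / (2 * σ)) - ε * σ / Δ from by field_simp; ring]
    rfl
  have valIic : (∫ x in Set.Iic (Δ/2 - ε * σ^2 / Δ), (gaussianPDFReal 0 ⟨σ^2, sq_nonneg σ⟩ x
        - rexp ε * gaussianPDFReal Δ ⟨σ^2, sq_nonneg σ⟩ x))
      = stdGaussianCDF (Δ / (2 * σ) - ε * σ / Δ)
        - rexp ε * stdGaussianCDF (-(Δ / (2 * σ)) - ε * σ / Δ) := by
    rw [hsplit1, hPt, hQt]
  have valIci : (∫ x in Set.Ici (Δ - (Δ/2 - ε * σ^2 / Δ)),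
        (gaussianPDFReal Δ ⟨σ^2, sq_nonneg σ⟩ x
          - rexp ε * gaussianPDFReal 0 ⟨σ^2, sq_nonneg σ⟩ x))
      = stdGaussianCDF (Δ / (2 * σ) - ε * σ / Δ)
        - rexp ε * stdGaussianCDF (-(Δ / (2 * σ)) - ε * σ / Δ) := by
    rw [hsplit2, agm_gauss_Ici σ Δ (Δ - (Δ/2 - ε * σ^2 / Δ)) hσ,
      agm_gauss_Ici σ 0 (Δ - (Δ/2 - ε * σ^2 / Δ)) hσ,
      show (Δ - (Δ/2 - ε * σ^2 / Δ) - Δ)/σ = -(Δ / (2 * σ) - ε * σ / Δ) from by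
        field_simp; ring,
      show (Δ - (Δ/2 - ε * σ^2 / Δ) - 0)/σ = -(-(Δ / (2 * σ)) - ε * σ / Δ) from by
        field_simp; ring,
      agm_stdGaussianCDF_neg, agm_stdGaussianCDF_neg]
    ring
  have hV0 : 0 ≤ stdGaussianCDF (Δ / (2 * σ) - ε * σ / Δ)
      - rexp ε * stdGaussianCDF (-(Δ / (2 * σ)) - ε * σ / Δ) := by
    rw [← valIic]
    exact setIntegral_nonneg measurableSet_Iic (fun x hx => sub_nonneg.2 ((hsign1 x).2 hx))
  have hofReal : ∀ a b : ℝ, 0 ≤ b →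
      (ENNReal.ofReal a ≤ ENNReal.ofReal (rexp ε) * ENNReal.ofReal b + ENNReal.ofReal δ
        ↔ a ≤ rexp ε * b + δ) := by
    intro a b hb
    rw [← ENNReal.ofReal_mul (exp_nonneg ε), ← ENNReal.ofReal_add (by positivity) hδ,
      ENNReal.ofReal_le_ofReal_iff (by positivity)]
  have hnn : ∀ (m : ℝ) (S : Set ℝ),
      0 ≤ ∫ x in S, gaussianPDFReal m ⟨σ^2, sq_nonneg σ⟩ x :=
    fun m S => integral_nonneg fun x => gaussianPDFReal_nonneg m _ x
  constructor
  · -- the supremum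
    apply le_antisymm
    · apply ciSup_le
      intro S
      apply Real.iSup_le (fun hS => ?_) hV0
      rw [← hsplit1 S]
      exact (key1 S hS).trans valIic.le
    · have hb : BddAbove (Set.range fun S : Set ℝ => ⨆ _ : MeasurableSet S,
          ((gaussianReal 0 ⟨σ^2, sq_nonneg σ⟩ S).toReal
            - rexp ε * (gaussianReal Δ ⟨σ^2, sq_nonneg σ⟩ S).toReal)) := by
        refine ⟨stdGaussianCDF (Δ / (2 * σ) - ε * σ / Δ)
          - rexp ε * stdGaussianCDF (-(Δ / (2 * σ)) - ε * σ / Δ), ?_⟩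
        rintro y ⟨S, rfl⟩
        apply Real.iSup_le (fun hS => ?_) hV0
        rw [← hsplit1 S]
        exact (key1 S hS).trans valIic.le
      refine le_ciSup_of_le hb (Set.Iic (Δ/2 - ε * σ^2 / Δ)) ?_
      rw [ciSup_pos measurableSet_Iic, ← hsplit1]
      exact valIic.ge
  · constructor
    · intro h
      have h1 := (h (Set.Iic (Δ/2 - ε * σ^2 / Δ)) measurableSet_Iic).1
      rw [gaussianReal_apply_eq_integral 0 hv, gaussianReal_apply_eq_integral Δ hv,
        hofReal _ _ (hnn Δ _)] at h1
      have h3 : (∫ x in Set.Iic (Δ/2 - ε * σ^2 / Δ),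
          (gaussianPDFReal 0 ⟨σ^2, sq_nonneg σ⟩ x
            - rexp ε * gaussianPDFReal Δ ⟨σ^2, sq_nonneg σ⟩ x)) ≤ δ := by
        rw [integral_sub hpi.integrableOn ((hqi.const_mul _).integrableOn),
          integral_const_mul]
        linarith
      linarith [valIic]
    · intro hVδ S hS
      constructor
      · rw [gaussianReal_apply_eq_integral 0 hv, gaussianReal_apply_eq_integral Δ hv,
          hofReal _ _ (hnn Δ _)]
        have h4 := (key1 S hS).trans (valIic.le.trans hVδ)
        rw [integral_sub hpi.integrableOn ((hqi.const_mul _).integrableOn),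
          integral_const_mul] at h4
        linarith
      · rw [gaussianReal_apply_eq_integral 0 hv, gaussianReal_apply_eq_integral Δ hv,
          hofReal _ _ (hnn 0 _)]
        have h4 := (key2 S hS).trans (valIci.le.trans hVδ)
        rw [integral_sub hqi.integrableOn ((hpi.const_mul _).integrableOn),
          integral_const_mul] at h4
        linarith
end
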